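/- Setting φ = (n^2+n-1)/n^2 and ξ = ((n^2-1)/n^2 - φ(n-c-1)/(n-1))·(n-1)/(n-c), the sum of the round-A and round-B fractional assignments yields: each facility i ≤ n-1 opened with y_i = (n^2-1)/n^2, its exclusive clients assigned with fraction (n^2-1)/n^2 to it and 1/(n^2(n-2)) to each other first-(n-1) facility; facilities n, n+1 opened with y = (n^2+n-1)/(2n^2), each of their exclusive clients assigned 1/2 to each. In particular every client's total assignment equals 1 and ∑_j x_{ij} = B·y_i for each facility. -/

import Mathlib

/-- Combining rounds A and B with `φ = (n²+n-1)/n²` and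
`ξ = ((n²-1)/n² - φ(n-c-1)/(n-1)) (n-1)/(n-c)` yields the bad LBFL solution: each
facility `i ≤ n-1` is opened with `y_i = (n²-1)/n²`, its exclusive clients assigned to
it with fraction `(n²-1)/n²` and to each other first-(n-1) facility with fraction
`1/(n²(n-2))`; facilities `n, n+1` are opened with `y = (n²+n-1)/(2n²)` and each of
their exclusive clients assigned `1/2` to each; every client's total assignment is `1`
and `∑_j x_{ij} = B y_i` for every facility, where `B = n²`. -/
theorem combined_bad_solution (n c : ℕ) (hn : 3 ≤ n) (hc : 2 ≤ c) (hcn : c + 2 ≤ n) :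
    let B : ℝ := (n : ℝ) ^ 2
    let φ : ℝ := ((n : ℝ) ^ 2 + n - 1) / (n : ℝ) ^ 2
    let ξ : ℝ := (((n : ℝ) ^ 2 - 1) / (n : ℝ) ^ 2 -
        φ * ((n : ℝ) - c - 1) / ((n : ℝ) - 1)) * ((n : ℝ) - 1) / ((n : ℝ) - c)
    -- exclusive clients assigned to their own facility
    (φ * ((n : ℝ) - c - 1) / ((n : ℝ) - 1) + ξ * ((n : ℝ) - c) / ((n : ℝ) - 1) =
      ((n : ℝ) ^ 2 - 1) / (n : ℝ) ^ 2) ∧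
    -- exclusive clients assigned to other first-(n-1) facilities
    (φ * ((n : ℝ) - c - 1) / (((n : ℝ) - 1) * ((n : ℝ) - 2) * ((n : ℝ) ^ 2 - 1)) +
      ξ * ((n : ℝ) - c) / (((n : ℝ) - 1) * ((n : ℝ) - 2) * ((n : ℝ) ^ 2 - 1)) =
      1 / ((n : ℝ) ^ 2 * ((n : ℝ) - 2))) ∧
    -- shared clients assigned to each of the far facilities with fraction 1/2
    (φ * (n : ℝ) ^ 2 / (2 * ((n : ℝ) ^ 2 + (n : ℝ) - 1)) = 1 / 2) ∧
    -- opening value of the far facilities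
    (φ / 2 = ((n : ℝ) ^ 2 + n - 1) / (2 * (n : ℝ) ^ 2)) ∧
    -- total assignment of each exclusive client equals 1
    (((n : ℝ) ^ 2 - 1) / (n : ℝ) ^ 2 +
      ((n : ℝ) - 2) * (1 / ((n : ℝ) ^ 2 * ((n : ℝ) - 2))) = 1) ∧
    -- total assignment of each shared client equals 1
    ((1 : ℝ) / 2 + 1 / 2 = 1) ∧
    -- ∑_j x_{ij} = B y_i for i ≤ n-1
    ((B - 1) * (((n : ℝ) ^ 2 - 1) / (n : ℝ) ^ 2) +
      ((n : ℝ) - 2) * (B - 1) * (1 / ((n : ℝ) ^ 2 * ((n : ℝ) - 2))) =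
      B * (((n : ℝ) ^ 2 - 1) / (n : ℝ) ^ 2)) ∧
    -- ∑_j x_{ij} = B y_i for facilities n, n+1
    ((B + (n : ℝ) - 1) * (1 / 2) = B * (((n : ℝ) ^ 2 + n - 1) / (2 * (n : ℝ) ^ 2))) := by
  have hn3 : (3:ℝ) ≤ (n:ℝ) := by exact_mod_cast hn
  have hcn' : (c:ℝ) + 2 ≤ (n:ℝ) := by exact_mod_cast hcn
  have h1 : (n:ℝ) - 1 ≠ 0 := by nlinarith
  have h2 : (n:ℝ) - 2 ≠ 0 := by nlinarith
  have hnc : (n:ℝ) - c ≠ 0 := by nlinarith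
  have hn0 : (n:ℝ) ≠ 0 := by nlinarith
  have hsq : (n:ℝ)^2 - 1 ≠ 0 := by nlinarith
  have hbig : (n:ℝ)^2 + n - 1 ≠ 0 := by nlinarith
  refine ⟨?_, ?_, ?_, ?_, ?_, ?_, ?_, ?_⟩ <;> field_simp <;> first
    | ring1
    | (left; first | trivial | ring1) | (right; ring1)
    | (apply div_self; intro h; apply hbig; linear_combination h)
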